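/- The residue of the commutator of any two pseudo-differential operators is a total derivative: for A, B pseudo-differential operators, res([A,B]) lies in the image of the derivation D, where res(Σ f_i D^i) = f_{-1}. -/

import Mathlib

/-!
Pseudo-differential operators over a commutative differential ring `(A, d)` are
modelled by their coefficient functions `a : ℤ → A` (the coefficient of `D^i`),
with support bounded above.  The product is
`f D^i · g D^j = ∑_{r ≥ 0} C(i,r) f D^r(g) D^{i+j-r}` and the adjoint is
`(f D^i)* = (-D)^i f`.
-/

noncomputable section

open scoped BigOperators

/-- The generalized binomial coefficient `C(i, r)` for an integer `i`
(the division is exact). -/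
def genChoose (i : ℤ) (r : ℕ) : ℤ :=
  (∏ s ∈ Finset.range r, (i - (s : ℤ))) / (r.factorial : ℤ)

variable {A : Type*} [CommRing A]

/-- Coefficient function of the product of two pseudo-differential operators:
`(f D^i) · (g D^j) = ∑_{r ≥ 0} C(i,r) f D^r(g) D^{i+j-r}`. -/
def pdoMul (d : A → A) (a b : ℤ → A) : ℤ → A :=
  fun k => ∑ᶠ (i : ℤ), ∑ᶠ (r : ℕ),
    ((genChoose i r : ℤ) : A) * a i * d^[r] (b (k - i + r))

/-- Coefficient function of the adjoint `A* = ∑_i (-D)^i f_i`. -/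
def pdoAdj (d : A → A) (a : ℤ → A) : ℤ → A :=
  fun k => ∑ᶠ (i : ℤ),
    if k ≤ i then
      ((-1 : A) ^ i.natAbs) * ((genChoose i (i - k).toNat : ℤ) : A)
        * d^[(i - k).toNat] (a i)
    else 0

/-- A pseudo-differential operator has coefficients supported in degrees `≤ N`. -/
def pdoBdd (a : ℤ → A) : Prop := ∃ N : ℤ, ∀ i : ℤ, N < i → a i = 0

/-! ### auxiliary lemmas -/

lemma pdo_prod_eq_desc (i : ℤ) (n : ℕ) :
    ∏ s ∈ Finset.range n, (i - (s : ℤ)) = (descPochhammer ℤ n).smeval i := by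
  induction n with
  | zero => simp [descPochhammer_zero]
  | succ n ih =>
      rw [Finset.prod_range_succ, ih, descPochhammer_succ_right, Polynomial.smeval_mul]
      simp [Polynomial.smeval_sub, Polynomial.smeval_X, Polynomial.smeval_natCast]

lemma pdo_fact_dvd_prod (i : ℤ) (n : ℕ) :
    ((n.factorial : ℤ)) ∣ ∏ s ∈ Finset.range n, (i - (s : ℤ)) := by
  rw [pdo_prod_eq_desc, Ring.descPochhammer_eq_factorial_smul_choose]
  exact ⟨Ring.choose i n, by rw [nsmul_eq_mul]⟩

lemma pdo_prod_reflect (i : ℤ) (n : ℕ) :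
    ∏ s ∈ Finset.range n, ((n : ℤ) - 1 - i - (s : ℤ))
      = (-1) ^ n * ∏ s ∈ Finset.range n, (i - (s : ℤ)) := by
  rw [← Finset.prod_range_reflect (fun s => ((n : ℤ) - 1 - i - (s : ℤ))) n]
  have hpow : ((-1 : ℤ)) ^ n = ∏ _s ∈ Finset.range n, (-1 : ℤ) := by simp
  rw [hpow, ← Finset.prod_mul_distrib]
  apply Finset.prod_congr rfl
  intro s hs
  rw [Finset.mem_range] at hs
  have : ((n - 1 - s : ℕ) : ℤ) = (n : ℤ) - 1 - s := by omega
  rw [this]; ring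

lemma genChoose_reflect (i : ℤ) (n : ℕ) :
    genChoose ((n : ℤ) - 1 - i) n = (-1) ^ n * genChoose i n := by
  unfold genChoose
  rw [pdo_prod_reflect, Int.mul_ediv_assoc _ (pdo_fact_dvd_prod i n)]

section DerivLemmas

variable (d : A → A)

lemma pdo_d_zero (hd_add : ∀ x y : A, d (x + y) = d x + d y) : d 0 = 0 := by
  have h := hd_add 0 0
  rw [add_zero] at h
  exact left_eq_add.mp h

lemma pdo_d_one (hd_leibniz : ∀ x y : A, d (x * y) = d x * y + x * d y) : d 1 = 0 := by
  have h := hd_leibniz 1 1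
  simp only [mul_one, one_mul] at h
  exact left_eq_add.mp h

lemma pdo_d_neg (hd_add : ∀ x y : A, d (x + y) = d x + d y) (x : A) : d (-x) = -d x := by
  have h := hd_add x (-x)
  rw [add_neg_cancel, pdo_d_zero d hd_add] at h
  linear_combination -h

lemma pdo_d_intCast (hd_add : ∀ x y : A, d (x + y) = d x + d y)
    (hd_leibniz : ∀ x y : A, d (x * y) = d x * y + x * d y) (m : ℤ) :
    d ((m : ℤ) : A) = 0 := by
  induction m using Int.induction_on with
  | zero => exact_mod_cast pdo_d_zero d hd_add
  | succ k ih =>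
      push_cast at ih ⊢
      rw [hd_add, ih, pdo_d_one d hd_leibniz, add_zero]
  | pred k ih =>
      push_cast at ih ⊢
      rw [sub_eq_add_neg, hd_add, ih, pdo_d_neg d hd_add, pdo_d_one d hd_leibniz,
        neg_zero, add_zero]

lemma pdo_iter_d_zero (hd_add : ∀ x y : A, d (x + y) = d x + d y) (r : ℕ) :
    d^[r] 0 = 0 := by
  induction r with
  | zero => rfl
  | succ r ih => rw [Function.iterate_succ_apply', ih, pdo_d_zero d hd_add]

lemma pdo_intCast_mul_mem (hd_add : ∀ x y : A, d (x + y) = d x + d y)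
    (hd_leibniz : ∀ x y : A, d (x * y) = d x * y + x * d y) (m : ℤ) {x : A}
    (hx : x ∈ Set.range d) : ((m : ℤ) : A) * x ∈ Set.range d := by
  obtain ⟨w, rfl⟩ := hx
  exact ⟨((m : ℤ) : A) * w, by
    rw [hd_leibniz, pdo_d_intCast d hd_add hd_leibniz, zero_mul, zero_add]⟩

lemma pdo_ibp (hd_add : ∀ x y : A, d (x + y) = d x + d y)
    (hd_leibniz : ∀ x y : A, d (x * y) = d x * y + x * d y) :
    ∀ (n : ℕ) (f g : A),
      f * d^[n] g - (-1 : A) ^ n * (g * d^[n] f) ∈ Set.range d := by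
  intro n
  induction n with
  | zero =>
      intro f g
      have h : f * d^[0] g - (-1 : A) ^ 0 * (g * d^[0] f) = 0 := by
        simp [mul_comm]
      rw [h]
      exact ⟨0, pdo_d_zero d hd_add⟩
  | succ n ih =>
      intro f g
      obtain ⟨w, hw⟩ := ih (d f) g
      refine ⟨f * d^[n] g - w, ?_⟩
      have hdsub : ∀ x y : A, d (x - y) = d x - d y := by
        intro x y
        rw [sub_eq_add_neg, hd_add, pdo_d_neg d hd_add, sub_eq_add_neg]
      rw [hdsub, hd_leibniz, hw, ← Function.iterate_succ_apply' d n g,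
        ← Function.iterate_succ_apply d n f]
      ring

end DerivLemmas

/-- Auxiliary double-sum coefficient. -/
def pdoT (d : A → A) (u v : ℤ → A) (i j : ℤ) : A :=
  if 0 ≤ i + j + 1 then
    ((genChoose i (i + j + 1).toNat : ℤ) : A) * u i * d^[(i + j + 1).toNat] (v j)
  else 0

lemma pdoMul_eq_sum (d : A → A) (hd_add : ∀ x y : A, d (x + y) = d x + d y)
    (N : ℤ) (u v : ℤ → A)
    (hu : ∀ i : ℤ, N < i → u i = 0) (hv : ∀ i : ℤ, N < i → v i = 0) :
    pdoMul d u v (-1)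
      = ∑ i ∈ Finset.Icc (-1 - N) N, ∑ j ∈ Finset.Icc (-1 - N) N, pdoT d u v i j := by
  set I : Finset ℤ := Finset.Icc (-1 - N) N with hI
  have stepA : ∀ i : ℤ,
      (∑ᶠ (r : ℕ), ((genChoose i r : ℤ) : A) * u i * d^[r] (v (-1 - i + r)))
        = ∑ j ∈ I, pdoT d u v i j := by
    intro i
    by_cases hui : u i = 0
    · simp [hui, pdoT]
    · set s : Finset ℕ :=
        (I.filter (fun j => 0 ≤ i + j + 1)).image (fun j => (i + j + 1).toNat) with hs
      have hsupp : (Function.support fun r : ℕ =>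
          ((genChoose i r : ℤ) : A) * u i * d^[r] (v (-1 - i + r))) ⊆ ↑s := by
        intro r hr
        simp only [Function.mem_support] at hr
        have hv' : v (-1 - i + (r : ℤ)) ≠ 0 := by
          intro h0
          apply hr
          rw [h0, pdo_iter_d_zero d hd_add, mul_zero]
        have hiN : i ≤ N := by
          by_contra h
          exact hui (hu i (by omega))
        have hjN : -1 - i + (r : ℤ) ≤ N := by
          by_contra h
          exact hv' (hv _ (by omega))
        simp only [hs, Finset.coe_image, Set.mem_image, Finset.mem_coe, Finset.mem_filter,
          Finset.mem_Icc, hI]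
        exact ⟨-1 - i + r, ⟨⟨by omega, hjN⟩, by omega⟩, by omega⟩
      rw [finsum_eq_sum_of_support_subset _ hsupp]
      have hinj : Set.InjOn (fun j => (i + j + 1).toNat)
          ↑(I.filter (fun j => 0 ≤ i + j + 1)) := by
        intro x hx y hy h
        simp only [Finset.coe_filter, Set.mem_setOf_eq] at hx hy
        simp only at h
        omega
      rw [hs, Finset.sum_image (fun x hx y hy h => hinj hx hy h), Finset.sum_filter]
      refine Finset.sum_congr rfl fun j hj => ?_
      simp only [pdoT]
      by_cases hc : 0 ≤ i + j + 1
      · rw [if_pos hc, if_pos hc]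
        have h2 : -1 - i + (((i + j + 1).toNat : ℕ) : ℤ) = j := by omega
        rw [h2]
      · rw [if_neg hc, if_neg hc]
  have hrw : pdoMul d u v (-1)
      = ∑ᶠ (i : ℤ), ∑ j ∈ I, pdoT d u v i j := by
    unfold pdoMul
    refine finsum_congr fun i => ?_
    have : ∀ r : ℕ, (-1 : ℤ) - i + (r : ℤ) = -1 - i + (r : ℤ) := fun r => by ring
    simpa using stepA i
  rw [hrw]
  refine finsum_eq_sum_of_support_subset _ ?_
  intro i hi
  simp only [Function.mem_support] at hi
  simp only [Finset.mem_coe, hI, Finset.mem_Icc]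
  by_contra hiI
  apply hi
  refine Finset.sum_eq_zero fun j hj => ?_
  simp only [hI, Finset.mem_Icc] at hj
  rcases (by omega : N < i ∨ i < -1 - N) with h | h
  · simp [pdoT, hu i h]
  · have : ¬ 0 ≤ i + j + 1 := by omega
    simp [pdoT, this]


/-- The residue (= coefficient of `D^{-1}`) of the commutator
of any two pseudo-differential operators is a total derivative, i.e. lies in
the image of the derivation `d`. -/
theorem res_commutator_is_total_derivative (d : A → A)
    (hd_add : ∀ x y : A, d (x + y) = d x + d y)
    (hd_leibniz : ∀ x y : A, d (x * y) = d x * y + x * d y)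
    (a b : ℤ → A) (ha : pdoBdd a) (hb : pdoBdd b) :
    pdoMul d a b (-1) - pdoMul d b a (-1) ∈ Set.range d := by
  obtain ⟨Na, hNa⟩ := ha
  obtain ⟨Nb, hNb⟩ := hb
  set N : ℤ := max Na Nb with hN
  have hA : ∀ i : ℤ, N < i → a i = 0 := fun i hi => hNa i (by omega)
  have hB : ∀ i : ℤ, N < i → b i = 0 := fun i hi => hNb i (by omega)
  rw [pdoMul_eq_sum d hd_add N a b hA hB, pdoMul_eq_sum d hd_add N b a hB hA]
  set I : Finset ℤ := Finset.Icc (-1 - N) N with hI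
  have hcomm : ∑ i ∈ I, ∑ j ∈ I, pdoT d b a i j
      = ∑ i ∈ I, ∑ j ∈ I, pdoT d b a j i := Finset.sum_comm
  rw [hcomm, ← Finset.sum_sub_distrib]
  simp_rw [← Finset.sum_sub_distrib]
  -- interpret the range of `d` as an additive subgroup
  let S : AddSubgroup A :=
    { carrier := Set.range d
      add_mem' := by
        rintro x y ⟨u, rfl⟩ ⟨w, rfl⟩
        exact ⟨u + w, hd_add u w⟩
      zero_mem' := ⟨0, pdo_d_zero d hd_add⟩
      neg_mem' := by
        rintro x ⟨u, rfl⟩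
        exact ⟨-u, pdo_d_neg d hd_add u⟩ }
  show _ ∈ S
  refine AddSubgroup.sum_mem S fun i _ => AddSubgroup.sum_mem S fun j _ => ?_
  by_cases hc : 0 ≤ i + j + 1
  · have hc' : 0 ≤ j + i + 1 := by omega
    set n : ℕ := (i + j + 1).toNat with hn
    have hcast : (n : ℤ) = i + j + 1 := Int.toNat_of_nonneg hc
    have hji : (j + i + 1).toNat = n := by omega
    simp only [pdoT, if_pos hc, if_pos hc', hji, ← hn]
    have hrefl : genChoose j n = (-1) ^ n * genChoose i n := by
      have hj : j = (n : ℤ) - 1 - i := by omega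
      rw [hj, genChoose_reflect]
    rw [hrefl]
    have hkey : ((genChoose i n : ℤ) : A) * a i * d^[n] (b j)
        - ((((-1 : ℤ) ^ n * genChoose i n : ℤ)) : A) * b j * d^[n] (a i)
        = ((genChoose i n : ℤ) : A)
            * (a i * d^[n] (b j) - (-1 : A) ^ n * (b j * d^[n] (a i))) := by
      push_cast
      ring
    rw [hkey]
    exact pdo_intCast_mul_mem d hd_add hd_leibniz _
      (pdo_ibp d hd_add hd_leibniz n (a i) (b j))
  · have hc' : ¬ 0 ≤ j + i + 1 := by omega
    simp only [pdoT, if_neg hc, if_neg hc', sub_zero]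
    exact zero_mem S
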